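/- arXiv:1202.3621 — 4 statements merged into one kernel-verified Lean document; each statement's English description precedes it below -/
import Mathlib

section
/- Let M be an n×n real matrix whose column space is contained in an s-dimensional subspace F of ℝ^n, let d = n − s, let {ω^1,…,ω^d} be a reduced basis of F^⊥, and let M̃ be the n×n matrix whose top d rows are ω^1,…,ω^d and whose bottom s rows agree with the bottom s rows of M. Then ker(M) ∩ F = {0} if and only if det(M̃) ≠ 0. -/
noncomputable section

namespace CRN

variable {n m : ℕ}

/-- The orthogonal complement of a subspace of `Fin n → ℝ` with respect to the
standard scalar product. -/
def orthComp (F : Submodule ℝ (Fin n → ℝ)) : Submodule ℝ (Fin n → ℝ) where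
  carrier := {w | ∀ v ∈ F, ∑ i, w i * v i = 0}
  add_mem' := by
    intro a b ha hb v hv
    have h1 := ha v hv
    have h2 := hb v hv
    have key : ∀ i, (a + b) i * v i = a i * v i + b i * v i := fun i => by
      simp [add_mul]
    calc ∑ i, (a + b) i * v i
        = ∑ i, (a i * v i + b i * v i) := Finset.sum_congr rfl (fun i _ => key i)
      _ = (∑ i, a i * v i) + ∑ i, b i * v i := Finset.sum_add_distrib
      _ = 0 := by rw [h1, h2, add_zero]
  zero_mem' := by
    intro v hv
    simp
  smul_mem' := by
    intro t a ha v hv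
    have h1 := ha v hv
    simp only [Set.mem_setOf_eq, Pi.smul_apply, smul_eq_mul]
    calc ∑ i, t * a i * v i
        = t * ∑ i, a i * v i := by
          rw [Finset.mul_sum]
          exact Finset.sum_congr rfl fun i _ => (mul_assoc _ _ _)
      _ = 0 := by rw [h1, mul_zero]

/-- `ω` is a reduced basis of `F^⊥`: it is a basis of the orthogonal complement of `F`,
`ω i` has `i`-th coordinate `1`, and `j`-th coordinate `0` for every `j < d`, `j ≠ i`. -/
def IsReducedBasis (d : ℕ) (F : Submodule ℝ (Fin n → ℝ)) (ω : Fin d → Fin n → ℝ) : Prop :=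
  (∀ i, ω i ∈ orthComp F) ∧
  Submodule.span ℝ (Set.range ω) = orthComp F ∧
  LinearIndependent ℝ ω ∧
  (∀ (i : Fin d) (j : Fin n), (j : ℕ) = (i : ℕ) → ω i j = 1) ∧
  (∀ (i : Fin d) (j : Fin n), (j : ℕ) < d → (j : ℕ) ≠ (i : ℕ) → ω i j = 0)

/-- The matrix whose top `d` rows are `ω` and whose remaining rows agree with `M`. -/
def tildeMat (d : ℕ) (ω : Fin d → Fin n → ℝ) (M : Matrix (Fin n) (Fin n) ℝ) :
    Matrix (Fin n) (Fin n) ℝ :=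
  Matrix.of fun i j => if h : (i : ℕ) < d then ω ⟨(i : ℕ), h⟩ j else M i j

/-- The stoichiometric matrix: `r`-th column is `y' r - y r`. -/
def stoich (y y' : Fin m → Fin n → ℝ) : Matrix (Fin n) (Fin m) ℝ :=
  Matrix.of fun i r => y' r i - y r i

/-- The stoichiometric subspace: the span of the reaction vectors `y' r - y r`. -/
def stoichSpan (y y' : Fin m → Fin n → ℝ) : Submodule ℝ (Fin n → ℝ) :=
  Submodule.span ℝ (Set.range fun r => (fun i => y' r i - y r i))

/-- The matrix whose `r`-th row is the kinetic-order vector `v r`. -/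
def Zmat (v : Fin m → Fin n → ℝ) : Matrix (Fin m) (Fin n) ℝ :=
  Matrix.of fun r i => v r i

/-- The Jacobian matrix of `f` at `c`. -/
def jac (f : (Fin n → ℝ) → Fin n → ℝ) (c : Fin n → ℝ) : Matrix (Fin n) (Fin n) ℝ :=
  Matrix.of fun i j => fderiv ℝ (fun x => f x i) c (Pi.single j 1)

/-- The species formation rate function of a kinetics `K`. -/
def specForm (y y' : Fin m → Fin n → ℝ) (K : Fin m → (Fin n → ℝ) → ℝ) (c : Fin n → ℝ) :
    Fin n → ℝ :=
  fun i => ∑ r, K r c * (y' r i - y r i)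

/-- The power-law rate functions with rate vector `κ` and kinetic order `v`. -/
def powerLaw (κ : Fin m → ℝ) (v : Fin m → Fin n → ℝ) : Fin m → (Fin n → ℝ) → ℝ :=
  fun r c => κ r * ∏ j, c j ^ v r j

/-- The power-law species formation rate function. -/
def plf (y y' : Fin m → Fin n → ℝ) (κ : Fin m → ℝ) (v : Fin m → Fin n → ℝ) (c : Fin n → ℝ) :
    Fin n → ℝ :=
  fun i => ∑ r, κ r * (∏ j, c j ^ v r j) * (y' r i - y r i)

/-- The extended rate function associated with a reduced basis `ω` and `f`. -/
def tildeF (d : ℕ) (ω : Fin d → Fin n → ℝ) (f : (Fin n → ℝ) → Fin n → ℝ) (c : Fin n → ℝ) :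
    Fin n → ℝ :=
  fun i => if h : (i : ℕ) < d then ∑ j, ω ⟨(i : ℕ), h⟩ j * c j else f c i

/-- The extended rate function with the bottom `s` components negated. -/
def hatF (d : ℕ) (ω : Fin d → Fin n → ℝ) (f : (Fin n → ℝ) → Fin n → ℝ) (c : Fin n → ℝ) :
    Fin n → ℝ :=
  fun i => if h : (i : ℕ) < d then ∑ j, ω ⟨(i : ℕ), h⟩ j * c j else -(f c i)

/-- Membership in the positive orthant. -/
def Pos (c : Fin n → ℝ) : Prop := ∀ i, 0 < c i

/-- The network is injective over the power-law kinetics with fixed kinetic order `v`. -/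
def InjOverPL (y y' : Fin m → Fin n → ℝ) (v : Fin m → Fin n → ℝ) : Prop :=
  ∀ κ : Fin m → ℝ, (∀ r, 0 < κ r) → ∀ a b : Fin n → ℝ, Pos a → Pos b → a ≠ b →
    a - b ∈ stoichSpan y y' → plf y y' κ v a ≠ plf y y' κ v b

/-- An influence specification takes values in `{-1, 0, 1}`. -/
def IsInfluence (I : Fin m → Fin n → ℝ) : Prop := ∀ r i, I r i = -1 ∨ I r i = 0 ∨ I r i = 1

/-- The influence specification associated with a kinetic order `v`. -/
def infOf (v : Fin m → Fin n → ℝ) : Fin m → Fin n → ℝ := fun r i => Real.sign (v r i)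

/-- `v ∈ Σ(I)`: the kinetic order `v` has associated influence specification `I`. -/
def InSigma (I : Fin m → Fin n → ℝ) (v : Fin m → Fin n → ℝ) : Prop :=
  ∀ r i, Real.sign (v r i) = I r i

/-- The partial order `I' ≼ I` on influence specifications. -/
def Preceq (I' I : Fin m → Fin n → ℝ) : Prop :=
  ∀ r i, (I' r i = 1 → I r i = 1) ∧ (I' r i = -1 → I r i = -1)

/-- The matrix `M̃(v)`: top `d` rows `ω`, bottom rows from `A ⬝ Z(v)`. -/
def Mt (y y' : Fin m → Fin n → ℝ) (d : ℕ) (ω : Fin d → Fin n → ℝ)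
    (v : Fin m → Fin n → ℝ) : Matrix (Fin n) (Fin n) ℝ :=
  tildeMat d ω (stoich y y' * Zmat v)

/-- The influence specification `I` has a signed determinant. -/
def SignedDet (y y' : Fin m → Fin n → ℝ) (d : ℕ) (ω : Fin d → Fin n → ℝ)
    (I : Fin m → Fin n → ℝ) : Prop :=
  ∀ v w, InSigma I v → InSigma I w →
    Real.sign (Mt y y' d ω v).det = Real.sign (Mt y y' d ω w).det

/-- The influence specification `I` is sign-nonsingular (SNS). -/
def IsSNS (y y' : Fin m → Fin n → ℝ) (d : ℕ) (ω : Fin d → Fin n → ℝ)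
    (I : Fin m → Fin n → ℝ) : Prop :=
  SignedDet y y' d ω I ∧ ∀ v, InSigma I v → (Mt y y' d ω v).det ≠ 0

/-- `Ω` is an admissible kinetics domain: `ℝ^n_{>0} ⊆ Ω ⊆ ℝ^n_{≥0}`. -/
def KinDom (Ω : Set (Fin n → ℝ)) : Prop :=
  {c : Fin n → ℝ | ∀ i, 0 < c i} ⊆ Ω ∧ Ω ⊆ {c : Fin n → ℝ | ∀ i, 0 ≤ c i}

/-- The rate functions are nonnegative on the domain. -/
def KinNonneg (Ω : Set (Fin n → ℝ)) (K : Fin m → (Fin n → ℝ) → ℝ) : Prop :=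
  ∀ r, ∀ c ∈ Ω, 0 ≤ K r c

/-- `I_r^+ ⊆ supp c`. -/
def PosSupp (I : Fin m → Fin n → ℝ) (r : Fin m) (c : Fin n → ℝ) : Prop :=
  ∀ i, I r i = 1 → c i ≠ 0

/-- The kinetics `K` respects the influence specification `I`. -/
def Respects (Ω : Set (Fin n → ℝ)) (K : Fin m → (Fin n → ℝ) → ℝ)
    (I : Fin m → Fin n → ℝ) : Prop :=
  ∀ c ∈ Ω, ∀ r, (0 < K r c ↔ PosSupp I r c)

/-- The kinetics `K` is strictly monotonic with respect to `I`. -/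
def StrictlyMonotonic (Ω : Set (Fin n → ℝ)) (K : Fin m → (Fin n → ℝ) → ℝ)
    (I : Fin m → Fin n → ℝ) : Prop :=
  Respects Ω K I ∧
  ∀ (r : Fin m) (c d : Fin n → ℝ), c ∈ Ω → d ∈ Ω → PosSupp I r c → PosSupp I r d →
    ∀ i, (∀ j, j ≠ i → c j = d j) →
      ((I r i = 1 → c i < d i → K r c < K r d) ∧
       (I r i = -1 → c i < d i → K r d < K r c) ∧
       (I r i = 0 → K r c = K r d))

/-- The kinetics `K` is differentiable with respect to `I`. -/
def DiffWrt (Ω : Set (Fin n → ℝ)) (K : Fin m → (Fin n → ℝ) → ℝ)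
    (I : Fin m → Fin n → ℝ) : Prop :=
  Respects Ω K I ∧
  (∀ r, ∀ c ∈ Ω, ContinuousWithinAt (K r) Ω c) ∧
  (∀ (r : Fin m) (c : Fin n → ℝ), (∀ i, 0 < c i) → DifferentiableAt ℝ (K r) c) ∧
  (∀ (r : Fin m) (c : Fin n → ℝ), (∀ i, 0 < c i) → ∀ i,
     Real.sign (fderiv ℝ (K r) c (Pi.single i 1)) = I r i)

/-- `a` and `b` are non-overlapping with respect to `I`. -/
def NonOverlap (I : Fin m → Fin n → ℝ) (a b : Fin n → ℝ) : Prop :=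
  ∀ r, ¬ PosSupp I r a → PosSupp I r b

/-- The kinetics `K` is weakly monotonic with respect to `I`. -/
def WeaklyMonotonic (y : Fin m → Fin n → ℝ) (Ω : Set (Fin n → ℝ))
    (K : Fin m → (Fin n → ℝ) → ℝ) (I : Fin m → Fin n → ℝ) : Prop :=
  ∀ a ∈ Ω, ∀ b ∈ Ω, NonOverlap I a b → ∀ r,
    (K r b < K r a → ∃ i, Real.sign (a i - b i) = I r i ∧ I r i ≠ 0) ∧
    (K r a = K r b →
      ((∀ i, y r i ≠ 0 → a i = b i) ∨
        ∃ i j, i ≠ j ∧ Real.sign (a i - b i) = I r i ∧ I r i ≠ 0 ∧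
          Real.sign (a j - b j) = -(I r j) ∧ I r j ≠ 0))

/-- A square real matrix is a P-matrix: all principal minors are positive. -/
def IsPMatrix {N : ℕ} (M : Matrix (Fin N) (Fin N) ℝ) : Prop :=
  ∀ J : Finset (Fin N),
    0 < (M.submatrix (fun i : {x // x ∈ J} => (i : Fin N))
          (fun j : {x // x ∈ J} => (j : Fin N))).det

/-- The minor `det(A_{J,C})` of the stoichiometric matrix. -/
def subDetA (y y' : Fin m → Fin n → ℝ) (s : ℕ) (J : Finset (Fin n)) (C : Finset (Fin m))
    (hJ : J.card = s) (hC : C.card = s) : ℝ :=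
  ((stoich y y').submatrix (fun a => (J.orderIsoOfFin hJ a).1)
    (fun b => (C.orderIsoOfFin hC b).1)).det

/-- The minor `det(Z(v)_{C,J})`. -/
def subDetZ (v : Fin m → Fin n → ℝ) (s : ℕ) (C : Finset (Fin m)) (J : Finset (Fin n))
    (hC : C.card = s) (hJ : J.card = s) : ℝ :=
  ((Zmat v).submatrix (fun a => (C.orderIsoOfFin hC a).1)
    (fun b => (J.orderIsoOfFin hJ b).1)).det

/-- The Hill-type species formation rate function. -/
def hillf (y y' : Fin m → Fin n → ℝ) (κ : Fin m → ℝ) (δ v : Fin m → Fin n → ℝ)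
    (c : Fin n → ℝ) : Fin n → ℝ :=
  fun i => ∑ r, κ r * (∏ j, (c j ^ v r j) / (δ r j + c j ^ v r j)) * (y' r i - y r i)


/-- Auxiliary: a vector orthogonal to every element of `orthComp F` lies in `F`. -/
lemma mem_of_orth_orthComp (F : Submodule ℝ (Fin n → ℝ)) (x : Fin n → ℝ)
    (hx : ∀ w ∈ orthComp F, ∑ i, w i * x i = 0) : x ∈ F := by
  classical
  let e : (Fin n → ℝ) ≃ₗ[ℝ] EuclideanSpace ℝ (Fin n) :=
    (WithLp.linearEquiv 2 ℝ (Fin n → ℝ)).symm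
  set F' : Submodule ℝ (EuclideanSpace ℝ (Fin n)) := F.map (e : (Fin n → ℝ) →ₗ[ℝ] EuclideanSpace ℝ (Fin n)) with hF'
  have hinner : ∀ u v : Fin n → ℝ, (inner ℝ (e u) (e v) : ℝ) = ∑ i, u i * v i := by
    intro u v
    simp [PiLp.inner_apply, RCLike.inner_apply, e, mul_comm]
  have hmem : ∀ w : Fin n → ℝ, w ∈ orthComp F ↔ e w ∈ F'ᗮ := by
    intro w
    constructor
    · intro hw
      rw [Submodule.mem_orthogonal]
      rintro u ⟨v, hv, rfl⟩
      rw [LinearEquiv.coe_coe, hinner]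
      have := hw v hv
      calc ∑ i, v i * w i = ∑ i, w i * v i := by
            exact Finset.sum_congr rfl fun i _ => mul_comm _ _
        _ = 0 := this
    · intro hw v hv
      have := (Submodule.mem_orthogonal _ _).mp hw (e v) ⟨v, hv, rfl⟩
      rw [hinner] at this
      calc ∑ i, w i * v i = ∑ i, v i * w i := by
            exact Finset.sum_congr rfl fun i _ => mul_comm _ _
        _ = 0 := this
  have hxx : e x ∈ F'ᗮᗮ := by
    rw [Submodule.mem_orthogonal]
    intro u hu
    have hu' : e (e.symm u) ∈ F'ᗮ := by simpa using hu
    have := hx (e.symm u) ((hmem _).mpr hu')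
    have heq : (inner ℝ u (e x) : ℝ) = ∑ i, (e.symm u) i * x i := by
      conv_lhs => rw [← e.apply_symm_apply u]
      rw [hinner]
    rw [heq, this]
  have : F'ᗮᗮ = F' := Submodule.orthogonal_orthogonal F'
  rw [this] at hxx
  obtain ⟨v, hv, hvx⟩ := hxx
  have : v = x := e.injective hvx
  exact this ▸ hv

/-- Proposition `kernel`. -/
theorem stmt0 {n s : ℕ} (d : ℕ) (hd : d = n - s)
    (M : Matrix (Fin n) (Fin n) ℝ) (F : Submodule ℝ (Fin n → ℝ))
    (hF : Module.finrank ℝ F = s)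
    (hcol : ∀ r : Fin n, (fun i => M i r) ∈ F)
    (ω : Fin d → Fin n → ℝ)
    (hω : IsReducedBasis d F ω) :
    (LinearMap.ker M.mulVecLin ⊓ F = ⊥) ↔ (tildeMat d ω M).det ≠ 0 := by
  classical
  obtain ⟨hωmem, hspan, hindep, hone, hzero⟩ := hω
  have hdn : d ≤ n := by omega
  -- mulVec of tildeMat
  have hmv : ∀ (x : Fin n → ℝ) (i : Fin n),
      (tildeMat d ω M).mulVec x i =
        if h : (i : ℕ) < d then ∑ j, ω ⟨(i : ℕ), h⟩ j * x j else M.mulVec x i := by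
    intro x i
    by_cases h : (i : ℕ) < d
    · simp [Matrix.mulVec, dotProduct, tildeMat, h]
    · simp [Matrix.mulVec, dotProduct, tildeMat, h]
  constructor
  · -- ker ∩ F = ⊥ → det ≠ 0
    intro hker hdet
    obtain ⟨x, hx0, hx⟩ := (Matrix.exists_mulVec_eq_zero_iff).mpr hdet
    -- x is orthogonal to every ω i
    have horth : ∀ i : Fin d, ∑ j, ω i j * x j = 0 := by
      intro i
      have hi : ((Fin.castLE hdn i : Fin n) : ℕ) < d := by simp [i.isLt]
      have := congrFun hx (Fin.castLE hdn i)
      rw [hmv, dif_pos hi] at this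
      simpa using this
    -- x is orthogonal to every element of orthComp F
    have horth' : ∀ w ∈ orthComp F, ∑ j, w j * x j = 0 := by
      intro w hw
      rw [← hspan] at hw
      induction hw using Submodule.span_induction with
      | mem w hw =>
          obtain ⟨i, rfl⟩ := hw
          exact horth i
      | zero => simp
      | add a b _ _ ha hb =>
          have : ∀ j, (a + b) j * x j = a j * x j + b j * x j := fun j => by
            simp [add_mul]
          rw [Finset.sum_congr rfl fun j _ => this j, Finset.sum_add_distrib, ha, hb,
            add_zero]
      | smul t a _ ha =>
          have : ∀ j, (t • a) j * x j = t * (a j * x j) := fun j => by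
            simp [mul_assoc]
          rw [Finset.sum_congr rfl fun j _ => this j, ← Finset.mul_sum, ha, mul_zero]
    have hxF : x ∈ F := mem_of_orth_orthComp F x horth'
    -- M.mulVec x ∈ F
    have hMxF : M.mulVec x ∈ F := by
      have : M.mulVec x = ∑ r, x r • (fun i => M i r) := by
        funext i
        simp [Matrix.mulVec, dotProduct, Finset.sum_apply, mul_comm]
      rw [this]
      exact Submodule.sum_mem _ fun r _ => Submodule.smul_mem _ _ (hcol r)
    -- bottom components of M.mulVec x vanish
    have hbot : ∀ j : Fin n, ¬ (j : ℕ) < d → M.mulVec x j = 0 := by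
      intro j hj
      have := congrFun hx j
      rw [hmv, dif_neg hj] at this
      exact this
    -- top components vanish too
    have htop : ∀ j : Fin n, (j : ℕ) < d → M.mulVec x j = 0 := by
      intro j hj
      have hwj := hωmem ⟨(j : ℕ), hj⟩ (M.mulVec x) hMxF
      have hsum : ∑ i, ω ⟨(j : ℕ), hj⟩ i * M.mulVec x i = M.mulVec x j := by
        rw [Finset.sum_eq_single j]
        · rw [hone ⟨(j : ℕ), hj⟩ j rfl, one_mul]
        · intro b _ hb
          by_cases hbd : (b : ℕ) < d
          · rw [hzero ⟨(j : ℕ), hj⟩ b hbd (fun h => hb (Fin.ext h)), zero_mul]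
          · rw [hbot b hbd, mul_zero]
        · intro h; exact absurd (Finset.mem_univ j) h
      rw [hsum] at hwj
      exact hwj
    have hMx : M.mulVec x = 0 := by
      funext j
      by_cases hj : (j : ℕ) < d
      · exact htop j hj
      · exact hbot j hj
    have : x ∈ LinearMap.ker M.mulVecLin ⊓ F :=
      Submodule.mem_inf.mpr ⟨LinearMap.mem_ker.mpr (by simpa using hMx), hxF⟩
    rw [hker] at this
    exact hx0 (by simpa using this)
  · -- det ≠ 0 → ker ∩ F = ⊥
    intro hdet
    rw [Submodule.eq_bot_iff]
    intro x hx
    obtain ⟨hxker, hxF⟩ := Submodule.mem_inf.mp hx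
    by_contra hx0
    apply hdet
    rw [← Matrix.exists_mulVec_eq_zero_iff]
    refine ⟨x, hx0, ?_⟩
    have hMx : M.mulVec x = 0 := by simpa using LinearMap.mem_ker.mp hxker
    funext i
    rw [hmv]
    by_cases h : (i : ℕ) < d
    · rw [dif_pos h]
      simpa using hωmem ⟨(i : ℕ), h⟩ x hxF
    · rw [dif_neg h]
      simp [hMx]
end CRN
end
end

section
/- Let M be an n×n real matrix whose column space is contained in an s-dimensional subspace F of ℝ^n, let d = n − s, let {ω^1,…,ω^d} be a reduced basis of F^⊥, and let M̃ be the n×n matrix whose top d rows are ω^1,…,ω^d and whose bottom s rows agree with the bottom s rows of M. Then det(M̃) = Σ_{J ⊆ {1,…,n}, #J = s} det(M_{J,J}), where M_{J,J} denotes the principal submatrix of M with rows and columns indexed by J. -/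
noncomputable section

namespace CRN

variable {n m : ℕ}

/-- Determinant of a matrix whose rows in `S` are the corresponding rows of the
identity matrix equals the principal minor on the complement of `S`. -/
private lemma det_rows_one {n : ℕ} (M : Matrix (Fin n) (Fin n) ℝ) (S : Finset (Fin n)) :
    Matrix.det (Matrix.of fun i j =>
        if i ∈ S then (1 : Matrix (Fin n) (Fin n) ℝ) i j else M i j)
      = (M.submatrix (fun i : {x // x ∈ Sᶜ} => (i : Fin n))
          (fun j : {x // x ∈ Sᶜ} => (j : Fin n))).det := by
  classical
  set B := Matrix.of fun i j =>
      if i ∈ S then (1 : Matrix (Fin n) (Fin n) ℝ) i j else M i j with hB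
  let e : {x // x ∈ S} ⊕ {x // ¬ x ∈ S} ≃ Fin n := Equiv.sumCompl _
  have h1 : B.submatrix e e =
      Matrix.fromBlocks 1 0
        (Matrix.of fun (a : {x // ¬ x ∈ S}) (b : {x // x ∈ S}) => M a b)
        (Matrix.of fun (a b : {x // ¬ x ∈ S}) => M a b) := by
    ext i j
    cases i with
    | inl a =>
      cases j with
      | inl b =>
        simp [B, e, Matrix.one_apply, a.2]
      | inr b =>
        have : (a : Fin n) ≠ (b : Fin n) := by
          intro h
          exact b.2 (h ▸ a.2)
        simp [B, e, Matrix.one_apply, a.2, this]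
    | inr a =>
      cases j with
      | inl b => simp [B, e, a.2]
      | inr b => simp [B, e, a.2]
  have h2 := Matrix.det_submatrix_equiv_self e B
  rw [h1, Matrix.det_fromBlocks_zero₁₂, Matrix.det_one, one_mul] at h2
  rw [← h2]
  let e2 : {x // x ∈ Sᶜ} ≃ {x // ¬ x ∈ S} :=
    Equiv.subtypeEquivRight (fun x => Finset.mem_compl)
  rw [← Matrix.det_submatrix_equiv_self e2]
  congr 1

/-- Proposition `decomp`. -/
theorem stmt1 {n s : ℕ} (d : ℕ) (hd : d = n - s)
    (M : Matrix (Fin n) (Fin n) ℝ) (F : Submodule ℝ (Fin n → ℝ))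
    (hF : Module.finrank ℝ F = s)
    (hcol : ∀ r : Fin n, (fun i => M i r) ∈ F)
    (ω : Fin d → Fin n → ℝ)
    (hω : IsReducedBasis d F ω) :
    (tildeMat d ω M).det =
      ∑ J ∈ Finset.powersetCard s (Finset.univ : Finset (Fin n)),
        (M.submatrix (fun i : {x // x ∈ J} => (i : Fin n))
          (fun j : {x // x ∈ J} => (j : Fin n))).det := by
  classical
  obtain ⟨hωF, hspan, hli, hdiag, hzero⟩ := hω
  have hsn : s ≤ n := by
    have h1 := Submodule.finrank_le F
    rw [hF, Module.finrank_fin_fun] at h1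
    exact h1
  have hdn : d ≤ n := by omega
  set mm : Finset (Fin n) → ℝ := fun J =>
    (M.submatrix (fun i : {x // x ∈ J} => (i : Fin n))
      (fun j : {x // x ∈ J} => (j : Fin n))).det with hmm
  -- cardinality of the set of "top" indices
  have hcard : (Finset.univ.filter fun i : Fin n => (i : ℕ) < d).card = d := by
    rw [show (Finset.univ.filter fun i : Fin n => (i : ℕ) < d)
        = Finset.map (Fin.castLEEmb hdn) Finset.univ by
      ext x
      simp only [Finset.mem_filter, Finset.mem_univ, true_and, Finset.mem_map,
        Fin.castLEEmb, Function.Embedding.coeFn_mk]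
      constructor
      · intro hx
        exact ⟨⟨(x : ℕ), hx⟩, by simp [Fin.castLE, Fin.ext_iff]⟩
      · rintro ⟨y, rfl⟩
        simpa using y.2]
    simp
  -- vanishing of principal minors of size > s
  have hvan : ∀ J : Finset (Fin n), s < J.card → mm J = 0 := by
    intro J hJ
    set A := M.submatrix (fun i : {x // x ∈ J} => (i : Fin n))
      (fun j : {x // x ∈ J} => (j : Fin n)) with hA
    set π : (Fin n → ℝ) →ₗ[ℝ] ({x // x ∈ J} → ℝ) :=
      LinearMap.funLeft ℝ ℝ (fun i : {x // x ∈ J} => (i : Fin n)) with hπ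
    set W : Submodule ℝ ({x // x ∈ J} → ℝ) := F.map π with hWd
    set cols : {x // x ∈ J} → ({x // x ∈ J} → ℝ) :=
      fun j i => M (i : Fin n) (j : Fin n) with hcols
    have hcolW : ∀ j, cols j ∈ W := by
      intro j
      exact ⟨fun i => M i (j : Fin n), hcol j, rfl⟩
    have hnli : ¬ LinearIndependent ℝ cols := by
      intro h
      set cols' : {x // x ∈ J} → W := fun j => ⟨cols j, hcolW j⟩ with hc'
      have h2 : LinearIndependent ℝ cols' :=
        LinearIndependent.of_comp W.subtype h
      have h3 := h2.fintype_card_le_finrank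
      rw [Fintype.card_coe] at h3
      have h4 : Module.finrank ℝ W ≤ s := by
        have := Submodule.finrank_map_le π F
        rw [hF] at this
        exact this
      omega
    rw [Fintype.not_linearIndependent_iff] at hnli
    obtain ⟨g, hgsum, i0, hgi0⟩ := hnli
    have hdet : A.det = 0 := by
      rw [← Matrix.exists_mulVec_eq_zero_iff]
      refine ⟨g, ?_, ?_⟩
      · intro h0
        exact hgi0 (by rw [h0]; rfl)
      · funext i
        have h6 := congrFun hgsum i
        rw [Finset.sum_apply] at h6
        simp only [Pi.smul_apply, smul_eq_mul, hcols, Pi.zero_apply] at h6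
        simp only [Pi.zero_apply]
        calc A.mulVec g i = ∑ j, A i j * g j := by
              simp [Matrix.mulVec, dotProduct]
          _ = ∑ j, g j * M (i : Fin n) (j : Fin n) := by
              refine Finset.sum_congr rfl (fun j _ => ?_)
              rw [hA]
              simp [mul_comm]
          _ = 0 := h6
    exact hdet
  -- the triangular matrix with rows ω and identity rows
  set Wm : Matrix (Fin n) (Fin n) ℝ := tildeMat d ω 1 with hWm
  have hWdet : Wm.det = 1 := by
    have htri : Wm.BlockTriangular id := by
      intro i j hij
      have hij' : (j : ℕ) < (i : ℕ) := hij
      by_cases h : (i : ℕ) < d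
      · have hjd : (j : ℕ) < d := lt_trans hij' h
        simp only [hWm, tildeMat, Matrix.of_apply, dif_pos h]
        exact hzero ⟨(i : ℕ), h⟩ j hjd (Nat.ne_of_lt hij')
      · simp only [hWm, tildeMat, Matrix.of_apply, dif_neg h]
        exact Matrix.one_apply_ne (Fin.ne_of_lt hij).symm
    rw [Matrix.det_of_upperTriangular htri]
    apply Finset.prod_eq_one
    intro i _
    by_cases h : (i : ℕ) < d
    · simp only [hWm, tildeMat, Matrix.of_apply, dif_pos h]
      exact hdiag ⟨(i : ℕ), h⟩ i rfl
    · simp [hWm, tildeMat, dif_neg h]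
  -- product identity
  have hprod : ∀ t : ℝ, Wm * (M + t • 1) =
      Matrix.diagonal (fun i : Fin n => if (i : ℕ) < d then t else 1) *
        tildeMat d ω (M + t • 1) := by
    intro t
    ext i j
    rw [Matrix.mul_apply, Matrix.diagonal_mul]
    by_cases h : (i : ℕ) < d
    · have hsum0 : ∑ k, ω ⟨(i : ℕ), h⟩ k * M k j = 0 :=
        hωF ⟨(i : ℕ), h⟩ (fun i' => M i' j) (hcol j)
      simp only [hWm, tildeMat, Matrix.of_apply, dif_pos h, Matrix.add_apply,
        Matrix.smul_apply, Matrix.one_apply, smul_eq_mul, mul_ite, mul_one, mul_zero,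
        if_pos h]
      rw [Finset.sum_congr rfl (fun k _ => mul_add (ω ⟨(i : ℕ), h⟩ k) (M k j) _),
        Finset.sum_add_distrib, hsum0, zero_add]
      simp [Finset.sum_ite_eq', mul_comm]
    · simp only [hWm, tildeMat, Matrix.of_apply, dif_neg h, if_neg h, one_mul]
      rw [Finset.sum_congr rfl (fun k _ => by rw [Matrix.one_apply])]
      simp [Finset.sum_ite_eq]
  have hdetprod : ∀ t : ℝ, (M + t • (1 : Matrix (Fin n) (Fin n) ℝ)).det =
      t ^ d * (tildeMat d ω (M + t • 1)).det := by
    intro t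
    have := congrArg Matrix.det (hprod t)
    rw [Matrix.det_mul, Matrix.det_mul, hWdet, one_mul, Matrix.det_diagonal] at this
    rw [this, Finset.prod_ite, Finset.prod_const, Finset.prod_const_one, mul_one, hcard]
  -- multilinear expansion of det (M + t • 1)
  have hexp : ∀ t : ℝ, (M + t • (1 : Matrix (Fin n) (Fin n) ℝ)).det =
      ∑ S : Finset (Fin n), t ^ S.card * mm Sᶜ := by
    intro t
    set f : MultilinearMap ℝ (fun _ : Fin n => Fin n → ℝ) ℝ :=
      (Matrix.detRowAlternating :
        AlternatingMap ℝ (Fin n → ℝ) ℝ (Fin n)).toMultilinearMap with hf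
    have h0 : (M + t • (1 : Matrix (Fin n) (Fin n) ℝ)).det =
        f ((fun i => (t • (1 : Matrix (Fin n) (Fin n) ℝ)) i) + fun i => M i) := by
      rw [show ((fun i => (t • (1 : Matrix (Fin n) (Fin n) ℝ)) i) + fun i => M i)
          = fun i => (M + t • 1) i from by
        funext i j
        simp only [Pi.add_apply, Matrix.add_apply]
        exact add_comm _ _]
      rfl
    rw [h0, f.map_add_univ]
    refine Finset.sum_congr rfl (fun S _ => ?_)
    set m0 : Fin n → Fin n → ℝ :=
      S.piecewise (fun i => (1 : Matrix (Fin n) (Fin n) ℝ) i) (fun i => M i) with hm0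
    have hpw : S.piecewise (fun i => (t • (1 : Matrix (Fin n) (Fin n) ℝ)) i)
        (fun i => M i) = S.piecewise (fun i => t • m0 i) m0 := by
      funext i
      by_cases h : i ∈ S
      · rw [Finset.piecewise_eq_of_mem _ _ _ h, Finset.piecewise_eq_of_mem _ _ _ h,
          hm0, Finset.piecewise_eq_of_mem _ _ _ h]
        rfl
      · rw [Finset.piecewise_eq_of_notMem _ _ _ h, Finset.piecewise_eq_of_notMem _ _ _ h,
          hm0, Finset.piecewise_eq_of_notMem _ _ _ h]
    rw [hpw, f.map_piecewise_smul (fun _ => t) m0 S, Finset.prod_const]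
    have hm0det : f m0 = mm Sᶜ := by
      have : m0 = Matrix.of fun i j =>
          if i ∈ S then (1 : Matrix (Fin n) (Fin n) ℝ) i j else M i j := by
        funext i j
        by_cases h : i ∈ S
        · rw [hm0, Finset.piecewise_eq_of_mem _ _ _ h]; simp [h]
        · rw [hm0, Finset.piecewise_eq_of_notMem _ _ _ h]; simp [h]
      rw [show f m0 = Matrix.det m0 from rfl, this, det_rows_one]
    rw [hm0det, smul_eq_mul]
  -- reindex the expansion by complements
  have hexp2 : ∀ t : ℝ, t ^ d * (tildeMat d ω (M + t • 1)).det =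
      ∑ J : Finset (Fin n), t ^ (n - J.card) * mm J := by
    intro t
    rw [← hdetprod t, hexp t]
    refine Fintype.sum_equiv ⟨fun S : Finset (Fin n) => Sᶜ, fun S => Sᶜ,
      fun S => by simp, fun S => by simp⟩ _ _ (fun S => ?_)
    have h1 : (Sᶜ : Finset (Fin n)).card = n - S.card := by
      rw [Finset.card_compl]
      simp
    have h2 : S.card ≤ n := by
      have := Finset.card_le_univ S
      simpa using this
    simp only [Equiv.coe_fn_mk, h1]
    congr 1
    congr 1
    omega
  set g : ℝ → ℝ := fun t => ∑ J : Finset (Fin n), t ^ (n - J.card - d) * mm J with hg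
  have hgt : ∀ t : ℝ, g t = ∑ J : Finset (Fin n), t ^ (n - J.card - d) * mm J :=
    fun t => rfl
  have heqg : ∀ t : ℝ, t ≠ 0 → (tildeMat d ω (M + t • 1)).det = g t := by
    intro t ht
    apply mul_left_cancel₀ (pow_ne_zero d ht)
    rw [hexp2 t, hgt, Finset.mul_sum]
    refine Finset.sum_congr rfl (fun J _ => ?_)
    have h2 : J.card ≤ n := by
      have := Finset.card_le_univ J
      simpa using this
    rcases le_or_gt J.card s with h | h
    · rw [← mul_assoc, ← pow_add]
      congr 2
      omega
    · rw [hvan J h, mul_zero, mul_zero, mul_zero]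
  have hc1 : Continuous fun t : ℝ => (tildeMat d ω (M + t • 1)).det := by
    apply Continuous.matrix_det
    apply continuous_matrix
    intro i j
    by_cases h : (i : ℕ) < d
    · simp only [tildeMat, Matrix.of_apply, dif_pos h]
      exact continuous_const
    · simp only [tildeMat, Matrix.of_apply, dif_neg h, Matrix.add_apply,
        Matrix.smul_apply, smul_eq_mul]
      exact continuous_const.add (continuous_id.mul continuous_const)
  have hc2 : Continuous g := by
    apply continuous_finset_sum
    intro J _
    exact (continuous_pow _).mul continuous_const
  have h00 : (tildeMat d ω (M + (0 : ℝ) • 1)).det = g 0 := by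
    have hEq : (fun t : ℝ => (tildeMat d ω (M + t • 1)).det) = g :=
      Continuous.ext_on (dense_compl_singleton (0 : ℝ)) hc1 hc2
        (fun t ht => heqg t (by simpa using ht))
    exact congrFun hEq 0
  have hM0 : tildeMat d ω (M + (0 : ℝ) • 1) = tildeMat d ω M := by
    simp
  have hg0 : g 0 = ∑ J ∈ Finset.powersetCard s (Finset.univ : Finset (Fin n)), mm J := by
    rw [hgt]
    have hterm : ∀ J : Finset (Fin n),
        (0 : ℝ) ^ (n - J.card - d) * mm J = if J.card = s then mm J else 0 := by
      intro J
      have h2 : J.card ≤ n := by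
        have := Finset.card_le_univ J
        simpa using this
      rcases lt_trichotomy J.card s with h | h | h
      · rw [if_neg (by omega), zero_pow (by omega), zero_mul]
      · rw [if_pos h, show n - J.card - d = 0 by omega, pow_zero, one_mul]
      · rw [hvan J h, mul_zero, if_neg (by omega)]
    rw [Finset.sum_congr rfl (fun J _ => hterm J), ← Finset.sum_filter]
    congr 1
    rw [Finset.powersetCard_eq_filter, Finset.powerset_univ]
  rw [← hM0, h00, hg0]
end CRN
end
end

section
/- Let K = (K_1,…,K_m) be a kinetics for the network such that each K_r is differentiable at every c ∈ ℝ^n_{>0}, and let f̃_K be the associated extended rate function. Then for every c ∈ ℝ^n_{>0}, ker(J_c(f_K)) ∩ Γ = {0} if and only if det(J_c(f̃_K)) ≠ 0. In particular, a positive steady state c ∈ ℝ^n_{>0} (a point with f_K(c) = 0) is degenerate, i.e. ker(J_c(f_K)) ∩ Γ ≠ {0}, if and only if det(J_c(f̃_K)) = 0. -/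
noncomputable section

namespace CRN

variable {n m : ℕ}

section Aux

open Matrix

variable {n : ℕ}

private def eucE (n : ℕ) : EuclideanSpace ℝ (Fin n) ≃ₗ[ℝ] (Fin n → ℝ) :=
  WithLp.linearEquiv 2 ℝ (Fin n → ℝ)

lemma orthComp_comap_euc (F : Submodule ℝ (Fin n → ℝ)) :
    (orthComp F).comap (eucE n).toLinearMap = (F.comap (eucE n).toLinearMap)ᗮ := by
  ext x
  constructor
  · intro hx u hu
    have := hx (eucE n u) hu
    simp only [PiLp.inner_apply, RCLike.inner_apply, conj_trivial]
    exact this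
  · intro hx v hv
    have := hx ((eucE n).symm v) (by simpa [eucE] using hv)
    simp only [PiLp.inner_apply, RCLike.inner_apply, conj_trivial, eucE] at this
    calc (∑ i, x i * v i) = ∑ i, v i * x i := by
          exact Finset.sum_congr rfl fun i _ => mul_comm _ _
      _ = 0 := (Finset.sum_congr rfl fun i _ => mul_comm _ _).trans this

lemma orthComp_orthComp (F : Submodule ℝ (Fin n → ℝ)) :
    orthComp (orthComp F) = F := by
  have h1 := orthComp_comap_euc (orthComp F)
  rw [orthComp_comap_euc F] at h1
  rw [Submodule.orthogonal_orthogonal] at h1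
  exact Submodule.comap_injective_of_surjective (eucE n).surjective h1

lemma mem_orthComp_span {ι : Type*} (g : ι → Fin n → ℝ) (v : Fin n → ℝ)
    (h : ∀ i, ∑ j, v j * g i j = 0) :
    v ∈ orthComp (Submodule.span ℝ (Set.range g)) := by
  intro w hw
  induction hw using Submodule.span_induction with
  | mem w hw => obtain ⟨i, rfl⟩ := hw; exact h i
  | zero => simp
  | add a b _ _ ha hb =>
      calc (∑ i, v i * (a + b) i) = ∑ i, (v i * a i + v i * b i) := by
            exact Finset.sum_congr rfl fun i _ => by simp [mul_add]
        _ = (∑ i, v i * a i) + ∑ i, v i * b i := Finset.sum_add_distrib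
        _ = 0 := by rw [ha, hb, add_zero]
  | smul t a _ ha =>
      calc (∑ i, v i * (t • a) i) = t * ∑ i, v i * a i := by
            rw [Finset.mul_sum]
            exact Finset.sum_congr rfl fun i _ => by simp; ring
        _ = 0 := by rw [ha, mul_zero]

end Aux

section Aux2

open Matrix

variable {n m : ℕ}

lemma jac_specForm (y y' : Fin m → Fin n → ℝ) (K : Fin m → (Fin n → ℝ) → ℝ)
    (c : Fin n → ℝ) (hK : ∀ r, DifferentiableAt ℝ (K r) c) :
    jac (specForm y y' K) c
      = stoich y y' * Zmat (fun r j => fderiv ℝ (K r) c (Pi.single j 1)) := by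
  ext i j
  have h1 : (fun x => specForm y y' K x i)
      = fun x => ∑ r, (fun x => K r x * (y' r i - y r i)) x := by
    funext x; rfl
  have h2 : fderiv ℝ (fun x => specForm y y' K x i) c
      = ∑ r, (y' r i - y r i) • fderiv ℝ (K r) c := by
    rw [h1, fderiv_fun_sum (fun r _ => (hK r).mul_const _)]
    exact Finset.sum_congr rfl fun r _ => fderiv_mul_const (hK r) _
  simp only [jac, Matrix.of_apply, h2, ContinuousLinearMap.coe_sum', Finset.sum_apply,
    ContinuousLinearMap.coe_smul', Pi.smul_apply, smul_eq_mul, Matrix.mul_apply,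
    stoich, Zmat, mul_comm]

lemma jac_tildeF (d : ℕ) (ω : Fin d → Fin n → ℝ) (f : (Fin n → ℝ) → Fin n → ℝ)
    (c : Fin n → ℝ) :
    jac (tildeF d ω f) c = tildeMat d ω (jac f c) := by
  ext i j
  by_cases h : (i : ℕ) < d
  · have hfun : (fun x => tildeF d ω f x i)
        = fun x => ∑ k, (fun x : Fin n → ℝ => ω ⟨(i : ℕ), h⟩ k * x k) x := by
      funext x; simp [tildeF, h]
    set L : (Fin n → ℝ) →L[ℝ] ℝ :=
      ∑ k, ω ⟨(i : ℕ), h⟩ k • (ContinuousLinearMap.proj (R := ℝ) (φ := fun _ : Fin n => ℝ) k)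
      with hL
    have hco : (fun x => tildeF d ω f x i) = ⇑L := by
      rw [hfun]; funext x
      simp [hL, ContinuousLinearMap.sum_apply]
    have : fderiv ℝ (fun x => tildeF d ω f x i) c = L := by
      rw [hco]; exact L.fderiv
    simp only [jac, Matrix.of_apply, this, tildeMat, dif_pos h, hL,
      ContinuousLinearMap.sum_apply, ContinuousLinearMap.smul_apply,
      ContinuousLinearMap.proj_apply, smul_eq_mul]
    simp [Pi.single_apply]
  · have hfun : (fun x => tildeF d ω f x i) = fun x => f x i := by
      funext x; simp [tildeF, h]
    simp only [jac, Matrix.of_apply, tildeMat, dif_neg h, hfun]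

end Aux2

section Aux3

open Matrix

lemma key_kernel_det {n m : ℕ} (d : ℕ) (hdn : d ≤ n)
    (y y' : Fin m → Fin n → ℝ) (ω : Fin d → Fin n → ℝ)
    (hω : IsReducedBasis d (stoichSpan y y') ω)
    (D : Fin m → Fin n → ℝ) :
    (LinearMap.ker (stoich y y' * Zmat D).mulVecLin ⊓ stoichSpan y y' = ⊥) ↔
      (tildeMat d ω (stoich y y' * Zmat D)).det ≠ 0 := by
  obtain ⟨hmem, hspan, hli, hdiag, hoff⟩ := hω
  set Γ := stoichSpan y y' with hΓ
  set J := stoich y y' * Zmat D with hJ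
  set M := tildeMat d ω J with hM
  have h1 : M.det ≠ 0 ↔ Function.Injective M.mulVec := by
    rw [Matrix.mulVec_injective_iff_isUnit, Matrix.isUnit_iff_isUnit_det, isUnit_iff_ne_zero]
  have h2 : Function.Injective M.mulVec ↔ ∀ v, M.mulVec v = 0 → v = 0 := by
    rw [show M.mulVec = ⇑M.mulVecLin from (Matrix.coe_mulVecLin M).symm,
      ← LinearMap.ker_eq_bot, LinearMap.ker_eq_bot']
  have colmem : ∀ r, (fun k => y' r k - y r k) ∈ Γ := fun r =>
    Submodule.subset_span ⟨r, rfl⟩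
  have hωJ : ∀ (i : Fin d) (j : Fin n), ∑ k, ω i k * J k j = 0 := by
    intro i j
    have step : ∑ k, ω i k * J k j
        = ∑ r, (∑ k, ω i k * (y' r k - y r k)) * D r j := by
      simp only [hJ, Matrix.mul_apply, stoich, Zmat, Matrix.of_apply, Finset.mul_sum]
      rw [Finset.sum_comm]
      refine Finset.sum_congr rfl fun r _ => ?_
      rw [Finset.sum_mul]
      exact Finset.sum_congr rfl fun k _ => by ring
    rw [step]
    exact Finset.sum_eq_zero fun r _ => by rw [hmem i _ (colmem r), zero_mul]
  constructor
  · intro hker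
    refine (h1.trans h2).mpr fun v hv => ?_
    have hvω : ∀ i : Fin d, ∑ j, ω i j * v j = 0 := by
      intro i
      have hlt : (i : ℕ) < n := lt_of_lt_of_le i.2 hdn
      have hrow := congrFun hv ⟨(i : ℕ), hlt⟩
      simpa [hM, Matrix.mulVec, dotProduct, tildeMat,
        dif_pos (show (((⟨(i : ℕ), hlt⟩ : Fin n)) : ℕ) < d from i.2)] using hrow
    have hvΓ : v ∈ Γ := by
      have hmemspan := mem_orthComp_span ω v (fun i => by
        rw [show (∑ j, v j * ω i j) = ∑ j, ω i j * v j from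
          Finset.sum_congr rfl fun j _ => mul_comm _ _]
        exact hvω i)
      rwa [hspan, orthComp_orthComp] at hmemspan
    have hJv_high : ∀ k : Fin n, ¬ ((k : ℕ) < d) → J.mulVec v k = 0 := by
      intro k hk
      have hrow := congrFun hv k
      simpa [hM, Matrix.mulVec, dotProduct, tildeMat, dif_neg hk] using hrow
    have hJv : J.mulVec v = 0 := by
      funext k
      by_cases hk : (k : ℕ) < d
      · set i : Fin d := ⟨(k : ℕ), hk⟩ with hi
        have hsum : ∑ l, ω i l * J.mulVec v l = 0 := by
          have e1 : ∑ l, ω i l * J.mulVec v l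
              = ∑ j, (∑ l, ω i l * J l j) * v j := by
            simp only [Matrix.mulVec, dotProduct, Finset.mul_sum]
            rw [Finset.sum_comm]
            refine Finset.sum_congr rfl fun j _ => ?_
            rw [Finset.sum_mul]
            exact Finset.sum_congr rfl fun l _ => by ring
          rw [e1]
          exact Finset.sum_eq_zero fun j _ => by rw [hωJ i j, zero_mul]
        have hterm : ∀ l : Fin n, ω i l * J.mulVec v l
            = if l = k then J.mulVec v k else 0 := by
          intro l
          by_cases hlk : l = k
          · subst hlk
            rw [if_pos rfl, hdiag i l rfl, one_mul]
          · rw [if_neg hlk]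
            by_cases hld : (l : ℕ) < d
            · have hne : (l : ℕ) ≠ (i : ℕ) := fun hh => hlk (Fin.ext hh)
              rw [hoff i l hld hne, zero_mul]
            · rw [hJv_high l hld, mul_zero]
        have e2 : ∑ l, ω i l * J.mulVec v l = J.mulVec v k := by
          simp_rw [hterm]
          simp
        rw [Pi.zero_apply, ← e2, hsum]
      · rw [Pi.zero_apply]
        exact hJv_high k hk
    have hvmem : v ∈ LinearMap.ker J.mulVecLin ⊓ Γ :=
      ⟨by simpa [Matrix.mulVecLin_apply] using hJv, hvΓ⟩
    rw [hker] at hvmem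
    simpa using hvmem
  · intro hdet
    rw [eq_bot_iff]
    rintro v ⟨hv1, hv2⟩
    have hJv : J.mulVec v = 0 := by
      simpa [Matrix.mulVecLin_apply] using hv1
    have hMv : M.mulVec v = 0 := by
      funext k
      by_cases hk : (k : ℕ) < d
      · have e : M.mulVec v k = ∑ j, ω ⟨(k : ℕ), hk⟩ j * v j := by
          simp [hM, Matrix.mulVec, dotProduct, tildeMat, dif_pos hk]
        rw [Pi.zero_apply, e]
        exact hmem _ v hv2
      · have e : M.mulVec v k = J.mulVec v k := by
          simp [hM, Matrix.mulVec, dotProduct, tildeMat, dif_neg hk]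
        rw [Pi.zero_apply, e, hJv, Pi.zero_apply]
    have hv0 := (h1.trans h2).mp hdet v hMv
    simp [hv0]

end Aux3


/-- Proposition `jaccomp`. -/
theorem stmt2 {n m s : ℕ} (d : ℕ) (hd : d = n - s)
    (y y' : Fin m → Fin n → ℝ)
    (hs : Module.finrank ℝ (stoichSpan y y') = s)
    (ω : Fin d → Fin n → ℝ)
    (hω : IsReducedBasis d (stoichSpan y y') ω)
    (K : Fin m → (Fin n → ℝ) → ℝ)
    (hKnn : ∀ (r : Fin m) (c : Fin n → ℝ), (∀ i, 0 < c i) → 0 ≤ K r c)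
    (hKdiff : ∀ (r : Fin m) (c : Fin n → ℝ), (∀ i, 0 < c i) → DifferentiableAt ℝ (K r) c)
    (c : Fin n → ℝ) (hc : ∀ i, 0 < c i) :
    ((LinearMap.ker (jac (specForm y y' K) c).mulVecLin ⊓ stoichSpan y y' = ⊥) ↔
        (jac (tildeF d ω (specForm y y' K)) c).det ≠ 0) ∧
    (specForm y y' K c = 0 →
      ((LinearMap.ker (jac (specForm y y' K) c).mulVecLin ⊓ stoichSpan y y' ≠ ⊥) ↔
        (jac (tildeF d ω (specForm y y' K)) c).det = 0)) := by
  have hdn : d ≤ n := hd ▸ Nat.sub_le n s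
  have hJ := jac_specForm y y' K c (fun r => hKdiff r c hc)
  have hT := jac_tildeF d ω (specForm y y' K) c
  have main : (LinearMap.ker (jac (specForm y y' K) c).mulVecLin ⊓ stoichSpan y y' = ⊥) ↔
      (jac (tildeF d ω (specForm y y' K)) c).det ≠ 0 := by
    rw [hT, hJ]
    exact key_kernel_det d hdn y y' ω hω _
  exact ⟨main, fun _ => by tauto⟩
end CRN
end
end

section
/- Let v be a kinetic order. For every c ∈ ℝ^n_{>0} and every rate vector κ, det(J_c(f̃_{κ,v})) = Σ_{C ⊆ {1,…,m}, #C = s} (∏_{l∈C} κ_l) · (∏_{i=1}^n c_i^{−1 + Σ_{l∈C} v_{l,i}}) · Σ_{J ⊆ {1,…,n}, #J = s} det(A_{J,C}) det(Z(v)_{C,J}) ∏_{j∉J} c_j. In particular, as a function of κ, det(J_c(f̃_{κ,v})) is a homogeneous polynomial of total degree s that is of degree at most one in each coordinate κ_r. -/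
noncomputable section

namespace CRN

variable {n m : ℕ}

section CB
open Finset Equiv Matrix Function
variable {s n : ℕ}

theorem perm_double_sum (M N : Matrix (Fin s) (Fin s) ℝ) :
    ∑ τ : Perm (Fin s), ∑ σ : Perm (Fin s),
      ((Equiv.Perm.sign σ : ℤ) : ℝ) * ∏ i, M (σ i) (τ i) * N (τ i) i = M.det * N.det := by
  have h1 : (M * N).det = ∑ p : Fin s → Fin s, ∑ σ : Perm (Fin s),
      ((Equiv.Perm.sign σ : ℤ) : ℝ) * ∏ i, M (σ i) (p i) * N (p i) i := by
    simp only [Matrix.det_apply', Matrix.mul_apply, Finset.prod_univ_sum, Finset.mul_sum,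
      Fintype.piFinset_univ]
    rw [Finset.sum_comm]
  have h2 : ∑ p : Fin s → Fin s, ∑ σ : Perm (Fin s),
      ((Equiv.Perm.sign σ : ℤ) : ℝ) * ∏ i, M (σ i) (p i) * N (p i) i
      = ∑ p : Fin s → Fin s with Function.Bijective p, ∑ σ : Perm (Fin s),
      ((Equiv.Perm.sign σ : ℤ) : ℝ) * ∏ i, M (σ i) (p i) * N (p i) i := by
    refine (Finset.sum_subset (Finset.filter_subset _ _) fun f _ hbij ↦
      Matrix.det_mul_aux ?_).symm
    simpa only [true_and, Finset.mem_filter, Finset.mem_univ] using hbij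
  have h3 : ∑ p : Fin s → Fin s with Function.Bijective p, ∑ σ : Perm (Fin s),
      ((Equiv.Perm.sign σ : ℤ) : ℝ) * ∏ i, M (σ i) (p i) * N (p i) i
      = ∑ τ : Perm (Fin s), ∑ σ : Perm (Fin s),
      ((Equiv.Perm.sign σ : ℤ) : ℝ) * ∏ i, M (σ i) (τ i) * N (τ i) i :=
    Finset.sum_bij (fun p h ↦ Equiv.ofBijective p (Finset.mem_filter.1 h).2)
      (fun _ _ ↦ Finset.mem_univ _)
      (fun _ _ _ _ h ↦ by injection h)
      (fun b _ ↦ ⟨b, Finset.mem_filter.2 ⟨Finset.mem_univ _, b.bijective⟩,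
        Equiv.coe_fn_injective rfl⟩) fun _ _ ↦ rfl
  rw [← h3, ← h2, ← h1, Matrix.det_mul]

theorem det_mul_aux' {M : Matrix (Fin s) (Fin n) ℝ} {N : Matrix (Fin n) (Fin s) ℝ}
    {p : Fin s → Fin n} (H : ¬Injective p) :
    (∑ σ : Perm (Fin s), ((Equiv.Perm.sign σ : ℤ) : ℝ) * ∏ x, M (σ x) (p x) * N (p x) x) = 0 := by
  obtain ⟨i, j, hpij, hij⟩ : ∃ i j, p i = p j ∧ i ≠ j := by
    rw [Injective] at H
    push_neg at H
    obtain ⟨i, j, h1, h2⟩ := H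
    exact ⟨i, j, h1, h2⟩
  exact
    Finset.sum_involution (fun σ _ => σ * Equiv.swap i j)
      (fun σ _ => by
        have : (∏ x, M (σ x) (p x)) = ∏ x, M ((σ * Equiv.swap i j) x) (p x) :=
          Fintype.prod_equiv (Equiv.swap i j) _ _ (fun x => by
            simp [Equiv.apply_swap_eq_self hpij])
        simp [this, Equiv.Perm.sign_swap hij, -Equiv.Perm.sign_swap', Finset.prod_mul_distrib,
          Equiv.apply_swap_eq_self hpij])
      (fun σ _ _ => (not_congr Equiv.mul_swap_eq_iff).mpr hij)
      (fun _ _ => Finset.mem_univ _) fun σ _ => Equiv.mul_swap_involutive i j σ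

theorem cauchyBinet (M : Matrix (Fin s) (Fin n) ℝ) (N : Matrix (Fin n) (Fin s) ℝ) :
    (M * N).det = ∑ J ∈ Finset.powersetCard s (Finset.univ : Finset (Fin n)),
      (if h : J.card = s then
        (M.submatrix id fun b => ((J.orderIsoOfFin h b : Fin n))).det *
        (N.submatrix (fun a => ((J.orderIsoOfFin h a : Fin n))) id).det
      else 0) := by
  classical
  set F : (Fin s → Fin n) → ℝ := fun p => ∑ σ : Perm (Fin s),
      ((Equiv.Perm.sign σ : ℤ) : ℝ) * ∏ i, M (σ i) (p i) * N (p i) i with hF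
  have h1 : (M * N).det = ∑ p : Fin s → Fin n, F p := by
    simp only [hF, Matrix.det_apply', Matrix.mul_apply, Finset.prod_univ_sum, Finset.mul_sum,
      Fintype.piFinset_univ]
    rw [Finset.sum_comm]
  have h2 : ∑ p : Fin s → Fin n, F p = ∑ p : Fin s → Fin n with Injective p, F p := by
    refine (Finset.sum_subset (Finset.filter_subset _ _) fun f _ hinj ↦ det_mul_aux' ?_).symm
    simpa only [true_and, Finset.mem_filter, Finset.mem_univ] using hinj
  have h3 : ∑ x ∈ (Finset.powersetCard s (Finset.univ : Finset (Fin n))).sigma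
        (fun _ => (Finset.univ : Finset (Perm (Fin s)))),
      (if h : x.1.card = s then F (fun i => ((x.1.orderIsoOfFin h (x.2 i) : Fin n))) else 0)
      = ∑ p : Fin s → Fin n with Injective p, F p := by
    refine Finset.sum_bij
      (fun x hx => fun i => ((x.1.orderIsoOfFin
        ((Finset.mem_powersetCard.1 (Finset.mem_sigma.1 hx).1).2) (x.2 i) : Fin n)))
      ?_ ?_ ?_ ?_
    · intro x hx
      refine Finset.mem_filter.2 ⟨Finset.mem_univ _, ?_⟩
      intro a b hab
      exact x.2.injective ((x.1.orderIsoOfFin _).injective (Subtype.coe_injective hab))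
    · rintro ⟨J, τ⟩ hx ⟨J', τ'⟩ hx' hi
      have hJc := (Finset.mem_powersetCard.1 (Finset.mem_sigma.1 hx).1).2
      have hJc' := (Finset.mem_powersetCard.1 (Finset.mem_sigma.1 hx').1).2
      have hi' : (fun i => ((J.orderIsoOfFin hJc (τ i) : Fin n)))
          = fun i => ((J'.orderIsoOfFin hJc' (τ' i) : Fin n)) := hi
      have himg : J = J' := by
        ext a
        constructor
        · intro ha
          have : a = ((J.orderIsoOfFin hJc) (τ (τ.symm ((J.orderIsoOfFin hJc).symm ⟨a, ha⟩))) :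
              Fin n) := by simp
          rw [this, congrFun hi']
          exact ((J'.orderIsoOfFin hJc') _).2
        · intro ha
          have : a = ((J'.orderIsoOfFin hJc') (τ' (τ'.symm ((J'.orderIsoOfFin hJc').symm
              ⟨a, ha⟩))) : Fin n) := by simp
          rw [this, ← congrFun hi']
          exact ((J.orderIsoOfFin hJc) _).2
      subst himg
      have hτ : τ = τ' := Equiv.ext fun i =>
        (J.orderIsoOfFin hJc).injective (Subtype.coe_injective (congrFun hi' i))
      rw [hτ]
    · intro p hp
      have hpinj : Injective p := (Finset.mem_filter.1 hp).2
      have hJc : (Finset.image p Finset.univ).card = s := by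
        rw [Finset.card_image_of_injective _ hpinj, Finset.card_univ, Fintype.card_fin]
      set J := Finset.image p Finset.univ with hJdef
      have hmemJ : ∀ a, p a ∈ J := fun a => Finset.mem_image_of_mem p (Finset.mem_univ a)
      have hτinj : Injective (fun a => (J.orderIsoOfFin hJc).symm ⟨p a, hmemJ a⟩) := by
        intro a b hab
        exact hpinj (Subtype.mk_eq_mk.1 ((J.orderIsoOfFin hJc).symm.injective hab))
      refine ⟨⟨J, Equiv.ofBijective _ (Finite.injective_iff_bijective.1 hτinj)⟩, ?_, ?_⟩
      · exact Finset.mem_sigma.2 ⟨Finset.mem_powersetCard.2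
          ⟨Finset.subset_univ _, hJc⟩, Finset.mem_univ _⟩
      · funext i
        show ((J.orderIsoOfFin _) ((J.orderIsoOfFin hJc).symm ⟨p i, hmemJ i⟩) : Fin n) = p i
        rw [OrderIso.apply_symm_apply]
    · intro x hx
      rw [dif_pos]
  rw [h1, h2, ← h3, Finset.sum_sigma]
  refine Finset.sum_congr rfl fun J hJ => ?_
  have hJc : J.card = s := (Finset.mem_powersetCard.1 hJ).2
  rw [dif_pos hJc]
  have := perm_double_sum (M.submatrix id fun b => ((J.orderIsoOfFin hJc b : Fin n)))
    (N.submatrix (fun a => ((J.orderIsoOfFin hJc a : Fin n))) id)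
  rw [← this]
  refine Finset.sum_congr rfl fun τ _ => ?_
  rw [dif_pos hJc]
  rfl
end CB

open Finset Matrix in
theorem jac_tildeF_s4 (d : ℕ) (ω : Fin d → Fin n → ℝ) (y y' : Fin m → Fin n → ℝ)
    (κ : Fin m → ℝ) (v : Fin m → Fin n → ℝ) (c : Fin n → ℝ) (hc : ∀ i, 0 < c i) :
    jac (tildeF d ω (plf y y' κ v)) c =
      tildeMat d ω (stoich y y' * Matrix.diagonal (fun r => κ r * ∏ j, c j ^ v r j)
        * Zmat v * Matrix.diagonal (fun j => (c j)⁻¹)) := by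
  funext i j
  show (Matrix.of fun i j => fderiv ℝ (fun x => tildeF d ω (plf y y' κ v) x i) c
    (Pi.single j 1)) i j = _
  simp only [Matrix.of_apply, tildeMat]
  by_cases h : (i : ℕ) < d
  · rw [dif_pos h]
    have hfun : (fun x : Fin n → ℝ => tildeF d ω (plf y y' κ v) x i)
        = fun x => ∑ k, ω ⟨(i : ℕ), h⟩ k * x k := by
      funext x; simp [tildeF, dif_pos h]
    have hder : HasFDerivAt (fun x : Fin n → ℝ => ∑ k, ω ⟨(i : ℕ), h⟩ k * x k)
        (∑ k, ω ⟨(i : ℕ), h⟩ k • (ContinuousLinearMap.proj k : (Fin n → ℝ) →L[ℝ] ℝ)) c :=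
      HasFDerivAt.fun_sum fun k _ => (hasFDerivAt_apply k c).const_mul _
    rw [hfun, hder.fderiv]
    simp [ContinuousLinearMap.proj_apply, Pi.single_apply, mul_ite, Finset.sum_ite_eq']
  · rw [dif_neg h]
    have hP : ∀ r : Fin m, HasFDerivAt (fun x : Fin n → ℝ => ∏ k, x k ^ v r k)
        (∑ k, (∏ l ∈ Finset.univ.erase k, c l ^ v r l) •
          ((v r k * c k ^ (v r k - 1)) •
            (ContinuousLinearMap.proj k : (Fin n → ℝ) →L[ℝ] ℝ))) c := fun r =>
      HasFDerivAt.finset_prod fun k _ =>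
        (hasFDerivAt_apply k c).rpow_const (Or.inl (hc k).ne')
    have hfun : (fun x : Fin n → ℝ => tildeF d ω (plf y y' κ v) x i)
        = fun x => ∑ r, κ r * (∏ k, x k ^ v r k) * (y' r i - y r i) := by
      funext x; simp [tildeF, dif_neg h, plf]
    have hder : HasFDerivAt (fun x : Fin n → ℝ => ∑ r, κ r * (∏ k, x k ^ v r k) * (y' r i - y r i))
        (∑ r, (y' r i - y r i) • (κ r • (∑ k, (∏ l ∈ Finset.univ.erase k, c l ^ v r l) •
          ((v r k * c k ^ (v r k - 1)) •
            (ContinuousLinearMap.proj k : (Fin n → ℝ) →L[ℝ] ℝ))))) c :=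
      HasFDerivAt.fun_sum fun r _ => (((hP r).const_mul (κ r)).mul_const _)
    rw [hfun, hder.fderiv]
    simp only [ContinuousLinearMap.coe_sum', Finset.sum_apply, ContinuousLinearMap.coe_smul',
      Pi.smul_apply, ContinuousLinearMap.proj_apply, smul_eq_mul, Pi.single_apply, mul_ite,
      mul_one, mul_zero, Finset.sum_ite_eq', Finset.mem_univ, if_pos]
    rw [Matrix.mul_diagonal, Matrix.mul_apply, Finset.sum_mul]
    refine Finset.sum_congr rfl fun r _ => ?_
    rw [Matrix.mul_diagonal]
    have e1 : c j ^ (v r j - 1) = c j ^ v r j * (c j)⁻¹ := by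
      rw [Real.rpow_sub (hc j), Real.rpow_one, div_eq_mul_inv]
    have e2 : (∏ l ∈ Finset.univ.erase j, c l ^ v r l) * c j ^ v r j = ∏ l, c l ^ v r l :=
      Finset.prod_erase_mul Finset.univ _ (Finset.mem_univ j)
    rw [e1, ← e2]
    simp only [stoich, Zmat, Matrix.of_apply]
    ring

theorem rpow_fin_sum {α : Type*} (x : ℝ) (hx : 0 < x) (C : Finset α) (f : α → ℝ) :
    x ^ (∑ l ∈ C, f l) = ∏ l ∈ C, x ^ f l := by
  classical
  induction C using Finset.cons_induction with
  | empty => simp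
  | cons a C ha ih => rw [Finset.sum_cons, Finset.prod_cons, Real.rpow_add hx, ih]

open Finset Matrix in
theorem det_formula {n m s : ℕ} (d : ℕ) (hd : d = n - s)
    (y y' : Fin m → Fin n → ℝ) (hs : Module.finrank ℝ (stoichSpan y y') = s)
    (ω : Fin d → Fin n → ℝ) (hω : IsReducedBasis d (stoichSpan y y') ω)
    (v : Fin m → Fin n → ℝ) (c : Fin n → ℝ) (hc : ∀ i, 0 < c i) (κ : Fin m → ℝ) :
    (jac (tildeF d ω (plf y y' κ v)) c).det =
      ∑ C ∈ Finset.powersetCard s (Finset.univ : Finset (Fin m)),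
        (∏ l ∈ C, κ l) *
          ((∏ i, c i ^ (-1 + ∑ l ∈ C, v l i)) *
            ∑ J ∈ Finset.powersetCard s (Finset.univ : Finset (Fin n)),
              (if h : J.card = s ∧ C.card = s then
                  subDetA y y' s J C h.1 h.2 * subDetZ v s C J h.2 h.1
                else 0) * ∏ j ∈ Jᶜ, c j) := by
  classical
  have hsn : s ≤ n := by
    have h1 := Submodule.finrank_le (stoichSpan y y')
    rwa [hs, Module.finrank_fin_fun] at h1
  have hds : d + s = n := by omega
  set e : Fin d ⊕ Fin s ≃ Fin n := finSumFinEquiv.trans (finCongr hds) with he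
  have hei : ∀ i : Fin d, ((e (Sum.inl i)) : ℕ) = (i : ℕ) := by intro i; simp [he]
  have her : ∀ i : Fin s, ((e (Sum.inr i)) : ℕ) = d + (i : ℕ) := by intro i; simp [he]
  set A := stoich y y' with hA
  set D : Fin m → ℝ := fun r => κ r * ∏ j, c j ^ v r j with hDdef
  set Λ : Matrix (Fin d) (Fin s) ℝ := Matrix.of fun i j => ω i (e (Sum.inr j)) with hΛ
  set Y : Matrix (Fin m) (Fin n) ℝ := Zmat v * Matrix.diagonal (fun j => (c j)⁻¹) with hY
  set B₂ : Matrix (Fin s) (Fin m) ℝ := Matrix.of (fun i r => A (e (Sum.inr i)) r * D r) with hB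
  set Y₁ : Matrix (Fin m) (Fin d) ℝ := Matrix.of (fun r j => Y r (e (Sum.inl j))) with hY1
  set Y₂ : Matrix (Fin m) (Fin s) ℝ := Matrix.of (fun r j => Y r (e (Sum.inr j))) with hY2
  have horth : ∀ (j : Fin d) (r : Fin m),
      A (e (Sum.inl j)) r = -∑ i : Fin s, Λ j i * A (e (Sum.inr i)) r := by
    intro j r
    have hmem : (fun i => y' r i - y r i) ∈ stoichSpan y y' := Submodule.subset_span ⟨r, rfl⟩
    have h0 := hω.1 j _ hmem
    have hsplit : ∑ k, ω j k * (y' r k - y r k)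
        = (∑ j' : Fin d, ω j (e (Sum.inl j')) * A (e (Sum.inl j')) r)
          + ∑ i : Fin s, ω j (e (Sum.inr i)) * A (e (Sum.inr i)) r := by
      rw [← Equiv.sum_comp e (fun k => ω j k * (y' r k - y r k)), Fintype.sum_sum_type]
      rfl
    have hfirst : ∑ j' : Fin d, ω j (e (Sum.inl j')) * A (e (Sum.inl j')) r
        = A (e (Sum.inl j)) r := by
      rw [Finset.sum_eq_single j]
      · rw [hω.2.2.2.1 j (e (Sum.inl j)) (hei j), one_mul]
      · intro b _ hbj
        rw [hω.2.2.2.2 j (e (Sum.inl b)) (by rw [hei]; exact b.2)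
          (by rw [hei]; exact fun hh => hbj (Fin.ext hh)), zero_mul]
      · exact fun h => absurd (Finset.mem_univ j) h
    rw [hsplit, hfirst] at h0
    exact eq_neg_of_add_eq_zero_left h0
  rw [jac_tildeF_s4 d ω y y' κ v c hc]
  rw [← Matrix.det_submatrix_equiv_self e]
  have hMY : A * Matrix.diagonal D * Zmat v * Matrix.diagonal (fun j => (c j)⁻¹)
      = (A * Matrix.diagonal D) * Y := by rw [hY, ← Matrix.mul_assoc]
  have hblock : (tildeMat d ω (A * Matrix.diagonal D * Zmat v
        * Matrix.diagonal fun j => (c j)⁻¹)).submatrix e e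
      = Matrix.fromBlocks 1 Λ (B₂ * Y₁) (B₂ * Y₂) := by
    funext p q
    cases p with
    | inl i =>
      have hlt : ((e (Sum.inl i)) : ℕ) < d := by rw [hei]; exact i.2
      have hidx : (⟨((e (Sum.inl i)) : ℕ), hlt⟩ : Fin d) = i := Fin.ext (hei i)
      cases q with
      | inl j =>
        show (tildeMat d ω _) (e (Sum.inl i)) (e (Sum.inl j)) = _
        rw [tildeMat, Matrix.of_apply, dif_pos hlt, hidx]
        by_cases hij : i = j
        · subst hij
          rw [hω.2.2.2.1 i _ (hei i)]
          simp [Matrix.fromBlocks, Matrix.one_apply]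
        · rw [hω.2.2.2.2 i _ (by rw [hei]; exact j.2)
            (by rw [hei]; exact fun hh => hij (Fin.ext hh.symm))]
          simp [Matrix.fromBlocks, Matrix.one_apply, hij, Ne.symm]
      | inr j =>
        show (tildeMat d ω _) (e (Sum.inl i)) (e (Sum.inr j)) = _
        rw [tildeMat, Matrix.of_apply, dif_pos hlt, hidx]
        rfl
    | inr i =>
      have hge : ¬ ((e (Sum.inr i)) : ℕ) < d := by rw [her]; omega
      cases q with
      | inl j =>
        show (tildeMat d ω _) (e (Sum.inr i)) (e (Sum.inl j)) = _
        rw [tildeMat, Matrix.of_apply, dif_neg hge, hMY]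
        show ((A * Matrix.diagonal D) * Y) _ _ = (B₂ * Y₁) i j
        rw [Matrix.mul_apply, Matrix.mul_apply]
        refine Finset.sum_congr rfl fun r _ => ?_
        rw [Matrix.mul_diagonal]
        rfl
      | inr j =>
        show (tildeMat d ω _) (e (Sum.inr i)) (e (Sum.inr j)) = _
        rw [tildeMat, Matrix.of_apply, dif_neg hge, hMY]
        show ((A * Matrix.diagonal D) * Y) _ _ = (B₂ * Y₂) i j
        rw [Matrix.mul_apply, Matrix.mul_apply]
        refine Finset.sum_congr rfl fun r _ => ?_
        rw [Matrix.mul_diagonal]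
        rfl
  rw [hblock, Matrix.det_fromBlocks_one₁₁,
    show B₂ * Y₂ - B₂ * Y₁ * Λ = B₂ * (Y₂ - Y₁ * Λ) by rw [Matrix.mul_sub, Matrix.mul_assoc],
    cauchyBinet]
  refine Finset.sum_congr rfl fun C hCmem => ?_
  have hC : C.card = s := (Finset.mem_powersetCard.1 hCmem).2
  rw [dif_pos hC]
  set gC : Fin s → Fin m := fun b => ((C.orderIsoOfFin hC b : Fin m)) with hgC
  have hd1 : (B₂.submatrix id gC).det
      = (∏ l ∈ C, D l) * (A.submatrix (fun i : Fin s => e (Sum.inr i)) gC).det := by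
    have hsplit : B₂.submatrix id gC
        = (A.submatrix (fun i : Fin s => e (Sum.inr i)) gC)
          * Matrix.diagonal (fun b => D (gC b)) := by
      funext a b; rw [Matrix.mul_diagonal]; rfl
    have hprod : ∏ b, D (gC b) = ∏ l ∈ C, D l := by
      rw [← Finset.prod_coe_sort C D]
      exact Equiv.prod_comp (C.orderIsoOfFin hC).toEquiv (fun x => D (x : Fin m))
    rw [hsplit, Matrix.det_mul, Matrix.det_diagonal, hprod]
    ring
  have hd2 : (Y.submatrix gC id) * (A.submatrix id gC)
      = ((Y₂ - Y₁ * Λ).submatrix gC id)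
        * (A.submatrix (fun i : Fin s => e (Sum.inr i)) gC) := by
    funext a b
    rw [Matrix.mul_apply, Matrix.mul_apply]
    rw [← Equiv.sum_comp e (fun k => (Y.submatrix gC id) a k * (A.submatrix id gC) k b),
      Fintype.sum_sum_type]
    have h1 : ∑ j : Fin d, (Y.submatrix gC id) a (e (Sum.inl j)) * (A.submatrix id gC) (e (Sum.inl j)) b
        = ∑ x : Fin s, (-∑ j : Fin d, Y (gC a) (e (Sum.inl j)) * Λ j x) * A (e (Sum.inr x)) (gC b) := by
      calc ∑ j : Fin d, (Y.submatrix gC id) a (e (Sum.inl j)) * (A.submatrix id gC) (e (Sum.inl j)) b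
          = ∑ j : Fin d, Y (gC a) (e (Sum.inl j)) * (-∑ x : Fin s, Λ j x * A (e (Sum.inr x)) (gC b)) := by
            refine Finset.sum_congr rfl fun j _ => ?_
            rw [Matrix.submatrix_apply, Matrix.submatrix_apply, id_eq, horth j]
        _ = ∑ j : Fin d, ∑ x : Fin s, -(Y (gC a) (e (Sum.inl j)) * Λ j x * A (e (Sum.inr x)) (gC b)) := by
            refine Finset.sum_congr rfl fun j _ => ?_
            rw [mul_neg, Finset.mul_sum, ← Finset.sum_neg_distrib]
            try exact Finset.sum_congr rfl fun x _ => by ring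
        _ = ∑ x : Fin s, ∑ j : Fin d, -(Y (gC a) (e (Sum.inl j)) * Λ j x * A (e (Sum.inr x)) (gC b)) :=
            Finset.sum_comm
        _ = ∑ x : Fin s, (-∑ j : Fin d, Y (gC a) (e (Sum.inl j)) * Λ j x) * A (e (Sum.inr x)) (gC b) := by
            refine Finset.sum_congr rfl fun x _ => ?_
            rw [neg_mul, Finset.sum_mul, ← Finset.sum_neg_distrib]
            try exact Finset.sum_congr rfl fun j _ => by ring
    rw [h1, ← Finset.sum_add_distrib]
    refine Finset.sum_congr rfl fun x _ => ?_
    simp only [Matrix.submatrix_apply, Matrix.sub_apply, id_eq, Matrix.mul_apply]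
    rw [hY2, hY1]
    simp only [Matrix.of_apply]
    try ring
  have hd3 : ((Y.submatrix gC id) * (A.submatrix id gC)).det
      = ∑ J ∈ Finset.powersetCard s (Finset.univ : Finset (Fin n)),
        (if h : J.card = s then
          (subDetZ v s C J hC h * ∏ j ∈ J, (c j)⁻¹) * subDetA y y' s J C h hC
        else 0) := by
    rw [cauchyBinet]
    refine Finset.sum_congr rfl fun J hJmem => ?_
    have hJ : J.card = s := (Finset.mem_powersetCard.1 hJmem).2
    rw [dif_pos hJ, dif_pos hJ]
    set gJ : Fin s → Fin n := fun b => ((J.orderIsoOfFin hJ b : Fin n)) with hgJ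
    have hsplit : (Y.submatrix gC id).submatrix id gJ
        = ((Zmat v).submatrix gC gJ) * Matrix.diagonal (fun b => (c (gJ b))⁻¹) := by
      funext a b
      rw [Matrix.mul_diagonal]
      show Y (gC a) (gJ b) = Zmat v (gC a) (gJ b) * (c (gJ b))⁻¹
      rw [hY, Matrix.mul_diagonal]
    have hprod : ∏ b, (c (gJ b))⁻¹ = ∏ j ∈ J, (c j)⁻¹ := by
      rw [← Finset.prod_coe_sort J (fun j => (c j)⁻¹)]
      exact Equiv.prod_comp (J.orderIsoOfFin hJ).toEquiv (fun x => (c (x : Fin n))⁻¹)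
    have hfst : ((Y.submatrix gC id).submatrix id gJ).det
        = subDetZ v s C J hC hJ * ∏ j ∈ J, (c j)⁻¹ := by
      rw [hsplit, Matrix.det_mul, Matrix.det_diagonal, hprod]
      rfl
    have hsnd : ((A.submatrix id gC).submatrix gJ id).det = subDetA y y' s J C hJ hC := rfl
    rw [hfst, hsnd]
  rw [hd1]
  have hdet2 : ((Y₂ - Y₁ * Λ).submatrix gC id).det
      * (A.submatrix (fun i : Fin s => e (Sum.inr i)) gC).det
      = ((Y.submatrix gC id) * (A.submatrix id gC)).det := by
    rw [hd2, Matrix.det_mul]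
  have hD : ∏ l ∈ C, D l = (∏ l ∈ C, κ l) * ∏ i, c i ^ (∑ l ∈ C, v l i) := by
    rw [hDdef, Finset.prod_mul_distrib]
    congr 1
    rw [Finset.prod_comm]
    exact Finset.prod_congr rfl fun j _ => (rpow_fin_sum (c j) (hc j) C fun l => v l j).symm
  have hpow : ∏ i, c i ^ (-1 + ∑ l ∈ C, v l i)
      = (∏ i, (c i)⁻¹) * ∏ i, c i ^ (∑ l ∈ C, v l i) := by
    rw [← Finset.prod_mul_distrib]
    exact Finset.prod_congr rfl fun i _ => by
      rw [Real.rpow_add (hc i), Real.rpow_neg_one]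
  calc (∏ l ∈ C, D l) * (A.submatrix (fun i : Fin s => e (Sum.inr i)) gC).det
        * ((Y₂ - Y₁ * Λ).submatrix gC id).det
      = (∏ l ∈ C, D l) * (((Y₂ - Y₁ * Λ).submatrix gC id).det
          * (A.submatrix (fun i : Fin s => e (Sum.inr i)) gC).det) := by ring
    _ = (∏ l ∈ C, D l) * ((Y.submatrix gC id) * (A.submatrix id gC)).det := by rw [hdet2]
    _ = _ := by
        rw [hd3, Finset.mul_sum, Finset.mul_sum, Finset.mul_sum]
        refine Finset.sum_congr rfl fun J hJmem => ?_
        have hJ : J.card = s := (Finset.mem_powersetCard.1 hJmem).2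
        rw [dif_pos hJ, dif_pos (And.intro hJ hC), hD, hpow]
        have hJinv : ∏ j ∈ J, (c j)⁻¹ = (∏ i, (c i)⁻¹) * ∏ j ∈ Jᶜ, c j := by
          have hsplitc : (∏ i, (c i)⁻¹)
              = (∏ j ∈ J, (c j)⁻¹) * ∏ j ∈ Jᶜ, (c j)⁻¹ :=
            (Finset.prod_mul_prod_compl J _).symm
          rw [hsplitc, mul_assoc, ← Finset.prod_mul_distrib]
          rw [Finset.prod_congr rfl fun j _ => inv_mul_cancel₀ (hc j).ne']
          rw [Finset.prod_const_one, mul_one]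
        rw [hJinv]
        ring
/-- Proposition `coefs2`. -/
theorem stmt4 {n m s : ℕ} (d : ℕ) (hd : d = n - s)
    (y y' : Fin m → Fin n → ℝ)
    (hs : Module.finrank ℝ (stoichSpan y y') = s)
    (ω : Fin d → Fin n → ℝ)
    (hω : IsReducedBasis d (stoichSpan y y') ω)
    (v : Fin m → Fin n → ℝ)
    (c : Fin n → ℝ) (hc : ∀ i, 0 < c i) :
    (∀ κ : Fin m → ℝ, (∀ r, 0 < κ r) →
      (jac (tildeF d ω (plf y y' κ v)) c).det =
        ∑ C ∈ Finset.powersetCard s (Finset.univ : Finset (Fin m)),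
          (∏ l ∈ C, κ l) *
            ((∏ i, c i ^ (-1 + ∑ l ∈ C, v l i)) *
              ∑ J ∈ Finset.powersetCard s (Finset.univ : Finset (Fin n)),
                (if h : J.card = s ∧ C.card = s then
                    subDetA y y' s J C h.1 h.2 * subDetZ v s C J h.2 h.1
                  else 0) * ∏ j ∈ Jᶜ, c j)) ∧
    (∃ P : MvPolynomial (Fin m) ℝ, P.IsHomogeneous s ∧ (∀ r, P.degreeOf r ≤ 1) ∧
      ∀ κ : Fin m → ℝ, (∀ r, 0 < κ r) →
        (jac (tildeF d ω (plf y y' κ v)) c).det = MvPolynomial.eval κ P) := by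
  classical
  constructor
  · intro κ _hκ
    exact det_formula d hd y y' hs ω hω v c hc κ
  · refine ⟨∑ C ∈ Finset.powersetCard s (Finset.univ : Finset (Fin m)),
      MvPolynomial.C ((∏ i, c i ^ (-1 + ∑ l ∈ C, v l i)) *
        ∑ J ∈ Finset.powersetCard s (Finset.univ : Finset (Fin n)),
          (if h : J.card = s ∧ C.card = s then
              subDetA y y' s J C h.1 h.2 * subDetZ v s C J h.2 h.1 else 0) * ∏ j ∈ Jᶜ, c j)
      * ∏ l ∈ C, MvPolynomial.X l, ?_, ?_, ?_⟩
    · refine MvPolynomial.IsHomogeneous.sum _ _ _ fun C hC => ?_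
      have hCc : C.card = s := (Finset.mem_powersetCard.1 hC).2
      have h1 : (∏ l ∈ C, (MvPolynomial.X l : MvPolynomial (Fin m) ℝ)).IsHomogeneous
          (∑ _l ∈ C, 1) :=
        MvPolynomial.IsHomogeneous.prod _ _ _ fun l _ => MvPolynomial.isHomogeneous_X _ _
      have hsum : (∑ _l ∈ C, 1) = s := by
        rw [Finset.sum_const, smul_eq_mul, mul_one, hCc]
      exact (hsum ▸ h1).C_mul _
    · intro r
      refine le_trans (MvPolynomial.degreeOf_sum_le _ _ _) ?_
      refine Finset.sup_le fun C _hC => ?_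
      refine le_trans (MvPolynomial.degreeOf_mul_le _ _ _) ?_
      rw [MvPolynomial.degreeOf_C, zero_add]
      refine le_trans (MvPolynomial.degreeOf_prod_le _ _ _) ?_
      have : ∀ l : Fin m, (MvPolynomial.X l : MvPolynomial (Fin m) ℝ).degreeOf r
          = if r = l then 1 else 0 := fun l => MvPolynomial.degreeOf_X r l
      rw [Finset.sum_congr rfl fun l _ => this l, Finset.sum_ite_eq]
      split <;> simp
    · intro κ _hκ
      rw [det_formula d hd y y' hs ω hω v c hc κ, map_sum]
      refine Finset.sum_congr rfl fun C _ => ?_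
      rw [map_mul, MvPolynomial.eval_C, map_prod]
      simp only [MvPolynomial.eval_X]
      ring
end CRN
end
end
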